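/- Let n > 1 be a positive integer. Then Φ_n(x) is the greatest common divisor in ℤ[x] of the polynomials 1 + x^{n/p} + x^{2n/p} + … + x^{(p-1)n/p} taken over all primes p dividing n. -/

import Mathlib

open Polynomial Finset

private lemma sum_eq_prod_cyc (n p : ℕ) (hn : 1 < n) (hp : p ∈ n.primeFactors) :
    (∑ i ∈ Finset.range p, (X : Polynomial ℤ) ^ (i * (n / p))) =
      ∏ d ∈ n.divisors \ (n / p).divisors, cyclotomic d ℤ := by
  have hpp := Nat.prime_of_mem_primeFactors hp
  have hpd := Nat.dvd_of_mem_primeFactors hp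
  have hn0 : 0 < n := by omega
  have hd : n / p ∈ n.properDivisors :=
    Nat.mem_properDivisors.2 ⟨Nat.div_dvd_of_dvd hpd, Nat.div_lt_self hn0 hpp.one_lt⟩
  have hd0 : 0 < n / p := Nat.div_pos (Nat.le_of_dvd hn0 hpd) hpp.pos
  have hne : (X : Polynomial ℤ) ^ (n / p) - 1 ≠ 0 := by
    have := monic_X_pow_sub_C (1 : ℤ) hd0.ne'
    simpa using this.ne_zero
  apply mul_right_cancel₀ hne
  conv_rhs => rw [mul_comm]
  rw [X_pow_sub_one_mul_prod_cyclotomic_eq_X_pow_sub_one_of_dvd ℤ (Nat.mem_properDivisors.1 hd).1 hn0.ne']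
  have h1 : (∑ i ∈ Finset.range p, (X : Polynomial ℤ) ^ (i * (n / p))) =
      ∑ i ∈ Finset.range p, ((X : Polynomial ℤ) ^ (n / p)) ^ i := by
    refine Finset.sum_congr rfl fun i _ => ?_
    rw [← pow_mul, Nat.mul_comm]
  rw [h1, geom_sum_mul, ← pow_mul, Nat.div_mul_cancel hpd]

private lemma no_common_proper_div (n : ℕ) (hn : 1 < n) (d : ℕ)
    (h : ∀ p ∈ n.primeFactors, d ∈ (n.divisors \ (n / p).divisors).erase n) : False := by
  have hn0 : 0 < n := by omega
  obtain ⟨p0, hp0⟩ := Nat.nonempty_primeFactors.2 hn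
  obtain ⟨hdn, hd⟩ := Finset.mem_erase.1 (h p0 hp0)
  have hddvd : d ∣ n := (Nat.mem_divisors.1 (Finset.mem_sdiff.1 hd).1).1
  have hdpos : 0 < d := Nat.pos_of_dvd_of_pos hddvd hn0
  have hlt : 1 < n / d := by
    rcases Nat.lt_or_ge 1 (n / d) with h1 | h1
    · exact h1
    · exfalso
      have := Nat.div_mul_cancel hddvd
      interval_cases h2 : (n / d)
      · omega
      · omega
  obtain ⟨q, hq⟩ := Nat.nonempty_primeFactors.2 hlt
  have hqp := Nat.prime_of_mem_primeFactors hq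
  have hqdvd : q ∣ n / d := Nat.dvd_of_mem_primeFactors hq
  have hqn : q ∈ n.primeFactors :=
    Nat.mem_primeFactors.2 ⟨hqp, hqdvd.trans (Nat.div_dvd_of_dvd hddvd), hn0.ne'⟩
  have hdq : d ∣ n / q := by
    rw [Nat.dvd_div_iff_mul_dvd (Nat.dvd_of_mem_primeFactors hqn)]
    rw [Nat.dvd_div_iff_mul_dvd hddvd] at hqdvd
    exact (mul_comm q d) ▸ hqdvd
  have := (Finset.mem_sdiff.1 (Finset.mem_erase.1 (h q hqn)).2).2
  exact this (Nat.mem_divisors.2 ⟨hdq, Nat.div_ne_zero_iff.2 ⟨hqp.pos.ne',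
    (Nat.le_of_dvd hn0 (Nat.dvd_of_mem_primeFactors hqn))⟩⟩)

theorem cyclotomic_is_gcd_of_prime_power_sums (n : ℕ) (hn : 1 < n) :
    (∀ p ∈ n.primeFactors,
        Polynomial.cyclotomic n ℤ ∣
          ∑ i ∈ Finset.range p, (Polynomial.X : Polynomial ℤ) ^ (i * (n / p))) ∧
    ∀ g : Polynomial ℤ,
      (∀ p ∈ n.primeFactors,
          g ∣ ∑ i ∈ Finset.range p, (Polynomial.X : Polynomial ℤ) ^ (i * (n / p))) →
        g ∣ Polynomial.cyclotomic n ℤ := by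
  have hn0 : 0 < n := by omega
  have hmem : ∀ p ∈ n.primeFactors, n ∈ n.divisors \ (n / p).divisors := by
    intro p hp
    have hpp := Nat.prime_of_mem_primeFactors hp
    have hlt : n / p < n := Nat.div_lt_self hn0 hpp.one_lt
    refine Finset.mem_sdiff.2 ⟨Nat.mem_divisors_self n hn0.ne', fun h => ?_⟩
    exact absurd (Nat.divisor_le h) (by omega)
  constructor
  · intro p hp
    rw [sum_eq_prod_cyc n p hn hp]
    exact Finset.dvd_prod_of_mem _ (hmem p hp)
  · intro g hg
    have hg' : ∀ p ∈ n.primeFactors, g ∣ ∏ d ∈ n.divisors \ (n / p).divisors, cyclotomic d ℤ :=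
      fun p hp => (sum_eq_prod_cyc n p hn hp) ▸ hg p hp
    obtain ⟨p0, hp0⟩ := Nat.nonempty_primeFactors.2 hn
    have hgprim : g.IsPrimitive := fun r hr =>
      (monic_prod_of_monic _ _ fun d _ => cyclotomic.monic d ℤ).isPrimitive r
        (hr.trans (hg' p0 hp0))
    rw [IsPrimitive.Int.dvd_iff_map_cast_dvd_map_cast _ _ hgprim,
      map_cyclotomic_int]
    set g' : Polynomial ℚ := g.map (Int.castRingHom ℚ) with hg'def
    have hgq : ∀ p ∈ n.primeFactors,
        g' ∣ ∏ d ∈ n.divisors \ (n / p).divisors, cyclotomic d ℚ := by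
      intro p hp
      have h1 := Polynomial.map_dvd (Int.castRingHom ℚ) (hg' p hp)
      rw [Polynomial.map_prod] at h1
      simpa only [map_cyclotomic_int] using h1
    -- For each p, split off cyclotomic n
    set Q : ℕ → Polynomial ℚ := fun p =>
      ∏ d ∈ (n.divisors \ (n / p).divisors).erase n, cyclotomic d ℚ with hQ
    have hsplit : ∀ p ∈ n.primeFactors,
        (∏ d ∈ n.divisors \ (n / p).divisors, cyclotomic d ℚ) = cyclotomic n ℚ * Q p :=
      fun p hp => (Finset.mul_prod_erase _ _ (hmem p hp)).symm
    have hgQ : ∀ p ∈ n.primeFactors, g' ∣ cyclotomic n ℚ * Q p :=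
      fun p hp => (hsplit p hp) ▸ hgq p hp
    -- g' divides the Finset.gcd
    have hgcd : g' ∣ (n.primeFactors).gcd (fun p => cyclotomic n ℚ * Q p) :=
      Finset.dvd_gcd hgQ
    rw [Finset.gcd_mul_left, (cyclotomic.monic n ℚ).normalize_eq_self] at hgcd
    -- the gcd of the Q's is a unit
    have hunit : IsUnit ((n.primeFactors).gcd Q) := by
      by_contra hu
      have hG0 : (n.primeFactors).gcd Q ≠ 0 := by
        intro h0
        have := Finset.gcd_dvd (f := Q) hp0
        rw [h0] at this
        have hQ0 : Q p0 = 0 := zero_dvd_iff.1 this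
        have : Q p0 ≠ 0 := Finset.prod_ne_zero_iff.2 fun d _ => cyclotomic_ne_zero d ℚ
        exact this hQ0
      obtain ⟨r, hrirr, hrdvd⟩ := WfDvdMonoid.exists_irreducible_factor hu hG0
      have hrprime : Prime r := hrirr.prime
      obtain ⟨d0, hd0mem, hrd0⟩ := hrprime.exists_mem_finset_dvd (hrdvd.trans
        (Finset.gcd_dvd hp0))
      have hall : ∀ p ∈ n.primeFactors, d0 ∈ (n.divisors \ (n / p).divisors).erase n := by
        intro p hp
        obtain ⟨dp, hdpmem, hrdp⟩ := hrprime.exists_mem_finset_dvd (hrdvd.trans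
          (Finset.gcd_dvd hp))
        rcases eq_or_ne d0 dp with rfl | hne
        · exact hdpmem
        · exact absurd ((cyclotomic.isCoprime_rat hne).isUnit_of_dvd' hrd0 hrdp) hrirr.not_isUnit
      exact no_common_proper_div n hn d0 hall
    -- conclude
    obtain ⟨u, hu⟩ := hunit
    rw [← hu] at hgcd
    exact (Units.dvd_mul_right).1 hgcd
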